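/- A descent lemma for twisted polynomial equations: let m ∈ ℕ, ε ∈ Γ_N ⊆ K̄, δ ∈ K̄[t], and F ∈ K̄[t] all of whose coefficients lie in the subring 𝔽̄_q[θ] of K̄. If ε·δ^{(R)} = δ·∏_{j=1}^{R}(t − θ^{q^j})^m + F, then all coefficients of δ lie in 𝔽̄_q[θ], and deg_θ δ ≤ max( qm/(q−1), (deg_θ F)/q^R ), where deg_θ g denotes the maximal degree in θ of the coefficients of g ∈ 𝔽̄_q[θ][t]. (This is the R-fold-twisted form of the equation ε·δ = δ^{(−R)}·T_{m,R} + F^{(−R)} with T_{m,R} = ∏_{i=0}^{R−1}((t−θ)^m)^{(−i)}.) -/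

import Mathlib

noncomputable section

open scoped Classical

set_option maxHeartbeats 1000000

namespace ZHPC

variable (Fq : Type) [Field Fq] [Fintype Fq]

/-- `q`, the cardinality of the base finite field `𝔽_q`. -/
def qc : ℕ := Fintype.card Fq

/-- A fixed algebraic closure `𝔽̄_q` of `𝔽_q`. -/
abbrev Fb := AlgebraicClosure Fq

/-- The field `𝔽̄_q((1/θ))` of formal Laurent series in `1/θ` over `𝔽̄_q`, modeled as the
field of formal Laurent series in one variable, `θ` being the inverse of that variable. -/
abbrev Kinf := LaurentSeries (Fb Fq)

/-- The embedding of the constants `𝔽̄_q → 𝔽̄_q((1/θ))`. -/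
def cst : Fb Fq →+* Kinf Fq := HahnSeries.C

/-- The element `θ`. -/
def theta : Kinf Fq := HahnSeries.single (-1 : ℤ) 1

/-- `ℓ_d = ∏_{i=1}^{d} (θ - θ^{q^i})`, with `ℓ_0 = 1`. -/
def ell (d : ℕ) : Kinf Fq := ∏ i ∈ Finset.Icc 1 d, (theta Fq - theta Fq ^ qc Fq ^ i)

/-- Arrays `(𝛆;𝔰)` of some depth `n`. -/
structure PArr (F : Type) where
  depth : ℕ
  s : Fin depth → ℕ
  eps : Fin depth → F

namespace PArr

variable {F : Type}

/-- A *positive array* for level `N`: all entries `sᵢ` are positive integers and all the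
characters `εᵢ` are `N`-th roots of unity. -/
def Positive [Monoid F] (N : ℕ) (A : PArr F) : Prop := (∀ i, 0 < A.s i) ∧ ∀ i, A.eps i ^ N = 1

/-- The weight `w(𝔰) = s₁ + ⋯ + s_n`. -/
def wt (A : PArr F) : ℕ := ∑ i, A.s i

/-- The `i`-th entry of `𝔰` (`0`-indexed), with value `0` beyond the depth. -/
def sAt (A : PArr F) (i : ℕ) : ℕ := if h : i < A.depth then A.s ⟨i, h⟩ else 0

/-- The partial sums `s₁ + ⋯ + s_i` (entries beyond the depth being `0`). -/
def psum (A : PArr F) (i : ℕ) : ℕ := ∑ j ∈ Finset.range i, A.sAt j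

/-- The character `χ(𝛆) = ε₁ ⋯ ε_n`. -/
def chi [CommMonoid F] (A : PArr F) : F := ∏ i, A.eps i

end PArr

/-- The Carlitz multiple polylogarithm at roots of unity
`Li(𝛆;𝔰) = Σ_{d₁ > ⋯ > d_n ≥ 0} ε₁^{d₁}⋯ε_n^{d_n} / (ℓ_{d₁}^{s₁}⋯ℓ_{d_n}^{s_n})`. -/
def Li (A : PArr (Fb Fq)) : Kinf Fq :=
  ∑' d : {f : Fin A.depth → ℕ // StrictAnti f},
    ∏ i, cst Fq (A.eps i ^ d.1 i) / ell Fq (d.1 i) ^ A.s i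

/-- `Si_d(𝛆;𝔰)`: same summand as `Li`, over decreasing tuples with `d₁ = d`. -/
def Sid (d : ℤ) (A : PArr (Fb Fq)) : Kinf Fq :=
  ∑' f : {f : Fin A.depth → ℕ // StrictAnti f ∧ ∀ i : Fin A.depth, i.val = 0 → (f i : ℤ) = d},
    ∏ i, cst Fq (A.eps i ^ f.1 i) / ell Fq (f.1 i) ^ A.s i

/-- `Si_{<d}(𝛆;𝔰)`: same summand as `Li`, over decreasing tuples with `d > d₁`. -/
def SidLt (d : ℤ) (A : PArr (Fb Fq)) : Kinf Fq :=
  ∑' f : {f : Fin A.depth → ℕ // StrictAnti f ∧ ∀ i : Fin A.depth, (f i : ℤ) < d},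
    ∏ i, cst Fq (A.eps i ^ f.1 i) / ell Fq (f.1 i) ^ A.s i

/-- The value at `θ` of the monic polynomial `θ^e + Σ_{j<e} c_j θ^j ∈ A = 𝔽_q[θ]`. -/
def monicVal (e : ℕ) (c : Fin e → Fq) : Kinf Fq :=
  theta Fq ^ e + ∑ j, cst Fq (algebraMap Fq (Fb Fq) (c j)) * theta Fq ^ (j : ℕ)

/-- The power sum `S_d(𝛆;𝔰)`, a sum over tuples of monic polynomials `a₁, …, a_n ∈ A₊`
with `d = deg a₁ > ⋯ > deg a_n ≥ 0`; a monic polynomial of degree `e` is encoded by its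
tuple of lower coefficients `c : Fin e → Fq`. -/
def Sd (d : ℤ) (A : PArr (Fb Fq)) : Kinf Fq :=
  ∑' e : {f : Fin A.depth → ℕ // StrictAnti f ∧ ∀ i : Fin A.depth, i.val = 0 → (f i : ℤ) = d},
    ∑ c : (∀ i, Fin (e.1 i) → Fq),
      ∏ i, cst Fq (A.eps i ^ e.1 i) / monicVal Fq (e.1 i) (c i) ^ A.s i

/-- The `N`-th cyclotomic multiple zeta value `ζ_A(𝛆;𝔰) = Σ_{d ≥ 0} S_d(𝛆;𝔰)`. -/
def zetaA (A : PArr (Fb Fq)) : Kinf Fq := ∑' d : ℕ, Sd Fq (d : ℤ) A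

/-- The cyclotomic field `k_N = 𝔽_q(ζ_N) ⊆ 𝔽̄_q`. -/
def kN (N : ℕ) : Subfield (Fb Fq) :=
  Subfield.closure (Set.range (algebraMap Fq (Fb Fq)) ∪ {x | x ^ N = 1})

/-- The field `K_N = k_N(θ)`, as a subfield of `𝔽̄_q((1/θ))`. -/
def KNf (N : ℕ) : Subfield (Kinf Fq) :=
  Subfield.closure ((cst Fq '' (kN Fq N : Set (Fb Fq))) ∪ {theta Fq})

/-- The ring `A_N = k_N[θ]`, as a subring of `𝔽̄_q((1/θ))`. -/
def AN (N : ℕ) : Subring (Kinf Fq) :=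
  Subring.closure ((cst Fq '' (kN Fq N : Set (Fb Fq))) ∪ {theta Fq})

/-- `CZ_{N,w}`: the `K_N`-span of the `N`-th cyclotomic multiple zeta values of weight `w`. -/
def CZ (N w : ℕ) : Submodule (KNf Fq N) (Kinf Fq) :=
  Submodule.span (KNf Fq N) {x | ∃ A : PArr (Fb Fq), A.Positive N ∧ A.wt = w ∧ x = zetaA Fq A}

/-- `CL_{N,w}`: the `K_N`-span of the CMPL's at `N`-th roots of unity of weight `w`. -/
def CL (N w : ℕ) : Submodule (KNf Fq N) (Kinf Fq) :=
  Submodule.span (KNf Fq N) {x | ∃ A : PArr (Fb Fq), A.Positive N ∧ A.wt = w ∧ x = Li Fq A}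

/-- The index set of pairs `(𝔰,𝛆)` with `𝔰 ∈ S_w` and `𝛆 ∈ Γ_N^{depth 𝔰}`: positive arrays
of weight `w` with `q ∤ sᵢ` for all `i`. -/
def SwIdx (N w : ℕ) : Type :=
  {A : PArr (Fb Fq) // A.Positive N ∧ 0 < A.depth ∧ A.wt = w ∧ ∀ i, ¬ qc Fq ∣ A.s i}

/-- `K̄`, an algebraic closure of `K = 𝔽_q(θ)`: it is realized as an algebraic closure of
the rational function field `𝔽̄_q(θ)`, which is an algebraic extension of `𝔽_q(θ)`. -/
abbrev Kbar := AlgebraicClosure (RatFunc (Fb Fq))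

/-- The element `θ ∈ K̄`. -/
def thetaB : Kbar Fq := algebraMap (RatFunc (Fb Fq)) (Kbar Fq) RatFunc.X

/-- The embedding of the constants `𝔽̄_q → K̄`. -/
def constB : Fb Fq →+* Kbar Fq :=
  (algebraMap (RatFunc (Fb Fq)) (Kbar Fq)).comp RatFunc.C

/-- The realization map `𝔽̄_q[θ][t] → K̄[t]`: a two-variable polynomial with coefficients
in `𝔽̄_q` is sent to the polynomial in `t` obtained by evaluating its coefficients at
`θ`.  A polynomial `g ∈ K̄[t]` has all its coefficients in `𝔽̄_q[θ]` exactly when it is in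
the image of this map. -/
def repB : Polynomial (Polynomial (Fb Fq)) →+* Polynomial (Kbar Fq) :=
  Polynomial.mapRingHom (Polynomial.eval₂RingHom (constB Fq) (thetaB Fq))

/-- The `r`-fold (positive) twist `f ↦ f^{(r)}` on `K̄[t]`, raising each coefficient to
the `q^r`-th power. -/
def ptwist (r : ℕ) (f : Polynomial (Kbar Fq)) : Polynomial (Kbar Fq) :=
  ∑ j ∈ f.support, Polynomial.C (f.coeff j ^ qc Fq ^ r) * Polynomial.X ^ j

/-- `deg_θ` of an element of `𝔽̄_q[θ][t]`: the maximal degree in `θ` of its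
coefficients. -/
def degTheta (P : Polynomial (Polynomial (Fb Fq))) : ℕ :=
  P.support.sup fun j => (P.coeff j).natDegree

/-- `R = [𝔽_q(ζ_N) : 𝔽_q]`: the least `r ≥ 1` such that all `N`-th roots of unity in `K̄`
lie in `𝔽_{q^r}`. -/
def RdegB (N : ℕ) : ℕ := sInf {r | 0 < r ∧ ∀ x : Kbar Fq, x ^ N = 1 → x ^ qc Fq ^ r = x}


section DescentAux

set_option linter.unusedSectionVars false

open Polynomial IntermediateField

variable (Fq : Type) [Field Fq] [Fintype Fq]

/-- The evaluation map `𝔽̄_q[θ'] → K̄` sending `θ'` to `θ`. -/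
def evB : Polynomial (Fb Fq) →+* Kbar Fq :=
  Polynomial.eval₂RingHom (constB Fq) (thetaB Fq)

lemma evB_C (a : Fb Fq) : evB Fq (C a) = constB Fq a := by
  simp [evB]

lemma evB_X : evB Fq X = thetaB Fq := by
  simp [evB]

lemma evB_eq_comp :
    evB Fq = (algebraMap (RatFunc (Fb Fq)) (Kbar Fq)).comp
      (algebraMap (Polynomial (Fb Fq)) (RatFunc (Fb Fq))) := by
  apply Polynomial.ringHom_ext
  · intro a
    rw [evB_C]
    simp [constB, RatFunc.algebraMap_C]
  · rw [evB_X]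
    simp [thetaB, RatFunc.algebraMap_X]

lemma evB_injective : Function.Injective (evB Fq) := by
  rw [evB_eq_comp, RingHom.coe_comp]
  exact (algebraMap (RatFunc (Fb Fq)) (Kbar Fq)).injective.comp
    (RatFunc.algebraMap_injective _)

lemma repB_coeff (g : Polynomial (Polynomial (Fb Fq))) (k : ℕ) :
    (repB Fq g).coeff k = evB Fq (g.coeff k) :=
  Polynomial.coeff_map _ _

lemma two_le_qc : 2 ≤ qc Fq := Fintype.one_lt_card

lemma ptwist_coeff (r : ℕ) (f : Polynomial (Kbar Fq)) (k : ℕ) :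
    (ptwist Fq r f).coeff k = f.coeff k ^ qc Fq ^ r := by
  have hq : qc Fq ^ r ≠ 0 := pow_ne_zero _ (by have := two_le_qc Fq; omega)
  rw [ptwist, Polynomial.finset_sum_coeff]
  simp only [Polynomial.coeff_C_mul, Polynomial.coeff_X_pow, mul_ite, mul_one, mul_zero]
  rw [Finset.sum_ite_eq f.support k (fun j => f.coeff j ^ qc Fq ^ r)]
  split_ifs with h
  · rfl
  · rw [Polynomial.notMem_support_iff.mp h, zero_pow hq]

lemma natDegree_coeff_le (P : Polynomial (Polynomial (Fb Fq))) (k : ℕ) :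
    (P.coeff k).natDegree ≤ degTheta Fq P := by
  by_cases h : k ∈ P.support
  · exact Finset.le_sup (f := fun j => (P.coeff j).natDegree) h
  · rw [Polynomial.notMem_support_iff.mp h]
    simp

lemma degTheta_le {P : Polynomial (Polynomial (Fb Fq))} {n : ℕ}
    (h : ∀ k, (P.coeff k).natDegree ≤ n) : degTheta Fq P ≤ n :=
  Finset.sup_le fun j _ => h j

lemma degTheta_mul_le (P Q : Polynomial (Polynomial (Fb Fq))) :
    degTheta Fq (P * Q) ≤ degTheta Fq P + degTheta Fq Q := by
  apply degTheta_le
  intro k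
  rw [Polynomial.coeff_mul]
  apply Polynomial.natDegree_sum_le_of_forall_le
  intro x _
  exact Polynomial.natDegree_mul_le.trans
    (add_le_add (natDegree_coeff_le Fq P x.1) (natDegree_coeff_le Fq Q x.2))

lemma degTheta_pow_le (P : Polynomial (Polynomial (Fb Fq))) (k : ℕ) :
    degTheta Fq (P ^ k) ≤ k * degTheta Fq P := by
  induction k with
  | zero =>
    apply degTheta_le
    intro j
    rcases eq_or_ne j 0 with rfl | hj
    · simp
    · simp [Polynomial.coeff_one, hj]
  | succ k ih =>
    rw [pow_succ]
    calc degTheta Fq (P ^ k * P) ≤ degTheta Fq (P ^ k) + degTheta Fq P :=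
          degTheta_mul_le Fq _ _
      _ ≤ k * degTheta Fq P + degTheta Fq P := by omega
      _ = (k + 1) * degTheta Fq P := by ring

lemma degTheta_prod_le {ι : Type*} (s : Finset ι) (f : ι → Polynomial (Polynomial (Fb Fq))) :
    degTheta Fq (∏ i ∈ s, f i) ≤ ∑ i ∈ s, degTheta Fq (f i) := by
  classical
  induction s using Finset.cons_induction with
  | empty =>
    apply degTheta_le
    intro j
    rcases eq_or_ne j 0 with rfl | hj
    · simp
    · simp [Polynomial.coeff_one, hj]
  | cons a s ha ih =>
    rw [Finset.prod_cons, Finset.sum_cons]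
    exact (degTheta_mul_le Fq _ _).trans (by omega)

lemma exists_rootFb {N : ℕ} (hN : 0 < N) (ε : Kbar Fq) (hε : ε ^ N = 1) :
    ∃ a : Fb Fq, a ^ N = 1 ∧ constB Fq a = ε := by
  have hp : (X ^ N - 1 : Polynomial (Fb Fq)) ≠ 0 := by
    have := Polynomial.X_pow_sub_C_ne_zero hN (1 : Fb Fq)
    simpa using this
  have hsp : (X ^ N - 1 : Polynomial (Fb Fq)).Splits :=
    IsAlgClosed.splits _
  have hroot : ε ∈ ((X ^ N - 1 : Polynomial (Fb Fq)).map (constB Fq)).roots := by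
    rw [Polynomial.mem_roots ((Polynomial.map_ne_zero_iff (constB Fq).injective).mpr hp)]
    rw [Polynomial.IsRoot.def, Polynomial.eval_map]
    simp [hε]
  rw [hsp.roots_map (constB Fq), Multiset.mem_map] at hroot
  obtain ⟨a, ha, hae⟩ := hroot
  refine ⟨a, ?_, hae⟩
  have := (Polynomial.mem_roots hp).mp ha
  rw [Polynomial.IsRoot.def] at this
  simpa [sub_eq_zero] using this

lemma exists_pow_card (y : Fb Fq) : ∃ a, 0 < a ∧ y ^ qc Fq ^ a = y := by
  have hyint : IsIntegral Fq y := (Algebra.IsAlgebraic.isAlgebraic (R := Fq) y).isIntegral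
  haveI : FiniteDimensional Fq Fq⟮y⟯ := IntermediateField.adjoin.finiteDimensional hyint
  haveI : Finite Fq⟮y⟯ := Module.finite_of_finite Fq
  haveI : Fintype Fq⟮y⟯ := Fintype.ofFinite _
  refine ⟨Module.finrank Fq Fq⟮y⟯, Module.finrank_pos, ?_⟩
  have hy : y ∈ Fq⟮y⟯ := IntermediateField.mem_adjoin_simple_self Fq y
  have h1 : (⟨y, hy⟩ : Fq⟮y⟯) ^ Fintype.card Fq⟮y⟯ = ⟨y, hy⟩ := FiniteField.pow_card _
  have hcard : Fintype.card Fq⟮y⟯ = qc Fq ^ Module.finrank Fq Fq⟮y⟯ :=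
    Module.card_eq_pow_finrank (K := Fq)
  rw [hcard] at h1
  have := congrArg Subtype.val h1
  simpa using this

lemma pow_iter (y : Fb Fq) (a : ℕ) (h : y ^ qc Fq ^ a = y) (k : ℕ) :
    y ^ qc Fq ^ (a * k) = y := by
  induction k with
  | zero => simp
  | succ k ih =>
    rw [Nat.mul_succ, pow_add, pow_mul, ih, h]

lemma RdegB_mem {N : ℕ} (hN : 0 < N) :
    RdegB Fq N ∈ {r | 0 < r ∧ ∀ x : Kbar Fq, x ^ N = 1 → x ^ qc Fq ^ r = x} := by
  apply Nat.sInf_mem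
  classical
  set s := (Polynomial.nthRoots N (1 : Fb Fq)).toFinset with hs
  choose a ha1 ha2 using fun y : Fb Fq => exists_pow_card Fq y
  refine ⟨∏ y ∈ s, a y, ?_, ?_⟩
  · exact Finset.prod_pos fun y _ => ha1 y
  · intro x hx
    obtain ⟨b, hbN, hbx⟩ := exists_rootFb Fq hN x hx
    have hbs : b ∈ s := by
      rw [hs, Multiset.mem_toFinset, Polynomial.mem_nthRoots hN]
      exact hbN
    obtain ⟨k, hk⟩ := Finset.dvd_prod_of_mem a hbs
    rw [← hbx, ← map_pow]
    congr 1
    rw [hk]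
    exact pow_iter Fq b (a b) (ha2 b) k

end DescentAux

/-- **A descent lemma for twisted polynomial equations** (Lemma `KuanLin 2`): let `m ∈ ℕ`,
`ε ∈ Γ_N`, `δ ∈ K̄[t]` and `F ∈ K̄[t]` with all coefficients of `F` in `𝔽̄_q[θ]`.  If
`ε·δ^{(R)} = δ·∏_{j=1}^{R}(t - θ^{q^j})^m + F` (the `R`-fold-twisted form of
`ε·δ = δ^{(-R)}·T_{m,R} + F^{(-R)}`), then all the coefficients of `δ` lie in `𝔽̄_q[θ]`
and `deg_θ δ ≤ max (qm/(q-1)) ((deg_θ F)/q^R)`. -/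
theorem descent_lemma_twisted_polynomial_equations
    (Fq : Type) [Field Fq] [Fintype Fq] (N : ℕ) (hN : 0 < N)
    (m : ℕ) (hm : 0 < m) (ε : Kbar Fq) (hε : ε ^ N = 1)
    (δ F : Polynomial (Kbar Fq)) (F₀ : Polynomial (Polynomial (Fb Fq)))
    (hF : F = repB Fq F₀)
    (heq : Polynomial.C ε * ptwist Fq (RdegB Fq N) δ
      = δ * (∏ j ∈ Finset.Icc 1 (RdegB Fq N),
              (Polynomial.X - Polynomial.C (thetaB Fq ^ qc Fq ^ j)) ^ m) + F) :
    ∃ δ₀ : Polynomial (Polynomial (Fb Fq)),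
      δ = repB Fq δ₀ ∧
      (degTheta Fq δ₀ : ℚ) ≤
        max ((qc Fq * m : ℚ) / ((qc Fq : ℚ) - 1))
            ((degTheta Fq F₀ : ℚ) / (qc Fq : ℚ) ^ RdegB Fq N) := by
  classical
  have hq2 : 2 ≤ qc Fq := two_le_qc Fq
  obtain ⟨hRpos, -⟩ := RdegB_mem Fq (N := N) hN
  have hinj : Function.Injective (evB Fq) := evB_injective Fq
  set e : Polynomial (Fb Fq) →+* Kbar Fq := evB Fq with he
  set T : Subring (Kbar Fq) := e.range with hT
  set R : ℕ := RdegB Fq N with hR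
  set P : Polynomial (Kbar Fq) := ∏ j ∈ Finset.Icc 1 R,
      (Polynomial.X - Polynomial.C (thetaB Fq ^ qc Fq ^ j)) ^ m with hP
  set P₀ : Polynomial (Polynomial (Fb Fq)) := ∏ j ∈ Finset.Icc 1 R,
      (Polynomial.X - Polynomial.C ((Polynomial.X : Polynomial (Fb Fq)) ^ qc Fq ^ j)) ^ m with hP₀
  have hPmap : repB Fq P₀ = P := by
    rw [hP₀, hP, map_prod]
    refine Finset.prod_congr rfl fun j _ => ?_
    rw [map_pow]
    congr 1
    show Polynomial.map e _ = _
    rw [Polynomial.map_sub, Polynomial.map_X, Polynomial.map_C, map_pow, evB_X]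
  have hPmonic : P.Monic :=
    Polynomial.monic_prod_of_monic _ _ fun j _ => (Polynomial.monic_X_sub_C _).pow m
  have hPdeg : P.natDegree = R * m := by
    rw [hP, Polynomial.natDegree_prod_of_monic _ _
      (fun j _ => (Polynomial.monic_X_sub_C _).pow m)]
    have hj : ∀ j ∈ Finset.Icc 1 R,
        ((Polynomial.X - Polynomial.C (thetaB Fq ^ qc Fq ^ j)) ^ m).natDegree = m := by
      intro j _
      rw [Polynomial.natDegree_pow, Polynomial.natDegree_X_sub_C, mul_one]
    rw [Finset.sum_congr rfl hj, Finset.sum_const, Nat.card_Icc, smul_eq_mul,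
      Nat.add_sub_cancel]
  set n : ℕ := P.natDegree with hn
  have hnpos : 0 < n := by
    have h' : n = R * m := hPdeg
    rw [h']
    exact Nat.mul_pos hRpos hm
  obtain ⟨ε', hε'N, hε'B⟩ := exists_rootFb Fq hN ε hε
  have hε'0 : ε' ≠ 0 := by
    intro h0
    rw [h0, map_zero] at hε'B
    rw [← hε'B, zero_pow (by omega : N ≠ 0)] at hε
    exact zero_ne_one hε
  have heqk : ∀ k, ε * δ.coeff k ^ qc Fq ^ R = (δ * P).coeff k + F.coeff k := by
    intro k
    have h := congrArg (fun g => Polynomial.coeff g k) heq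
    simpa [Polynomial.coeff_C_mul, ptwist_coeff, Polynomial.coeff_add] using h
  have hεT : ε ∈ T := ⟨Polynomial.C ε', by rw [show e (Polynomial.C ε') = constB Fq ε' from evB_C Fq ε', hε'B]⟩
  have hFT : ∀ k, F.coeff k ∈ T := by
    intro k
    exact ⟨F₀.coeff k, by rw [show e (F₀.coeff k) = (repB Fq F₀).coeff k from (repB_coeff Fq F₀ k).symm, ← hF]⟩
  have hPT : ∀ k, P.coeff k ∈ T := by
    intro k
    exact ⟨P₀.coeff k, by rw [show e (P₀.coeff k) = (repB Fq P₀).coeff k from (repB_coeff Fq P₀ k).symm, hPmap]⟩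
  have key : ∀ t k, δ.natDegree < k + t → δ.coeff k ∈ T := by
    intro t
    induction t with
    | zero =>
      intro k hk
      rw [Polynomial.coeff_eq_zero_of_natDegree_lt (by omega)]
      exact zero_mem T
    | succ t ih =>
      intro k hk
      rcases lt_or_ge δ.natDegree (k + t) with h | h
      · exact ih k h
      have hi : ∀ i, k < i → δ.coeff i ∈ T := fun i hi' => ih i (by omega)
      have hmulT : (δ * P).coeff (k + n) ∈ T := by
        have h1 : (δ * P).coeff (k + n)
            = ε * δ.coeff (k + n) ^ qc Fq ^ R - F.coeff (k + n) :=
          eq_sub_of_add_eq (heqk (k + n)).symm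
        rw [h1]
        exact sub_mem (mul_mem hεT (pow_mem (hi _ (by omega)) _)) (hFT _)
      have hkn : (k, n) ∈ Finset.HasAntidiagonal.antidiagonal (k + n) := by
        simp [Finset.HasAntidiagonal.mem_antidiagonal]
      have hsum : (δ * P).coeff (k + n) = δ.coeff k * P.coeff n +
          ∑ x ∈ (Finset.HasAntidiagonal.antidiagonal (k + n)).erase (k, n), δ.coeff x.1 * P.coeff x.2 := by
        rw [Polynomial.coeff_mul]
        exact (Finset.add_sum_erase _ _ hkn).symm
      have hrest : ∑ x ∈ (Finset.HasAntidiagonal.antidiagonal (k + n)).erase (k, n),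
          δ.coeff x.1 * P.coeff x.2 ∈ T := by
        refine Subring.sum_mem T fun x hx => ?_
        have hx1 := Finset.mem_erase.mp hx
        have hx2 : x.1 + x.2 = k + n := Finset.HasAntidiagonal.mem_antidiagonal.mp hx1.2
        rcases lt_trichotomy x.1 k with h1 | h1 | h1
        · have hx3 : n < x.2 := by omega
          rw [Polynomial.coeff_eq_zero_of_natDegree_lt hx3, mul_zero]
          exact zero_mem T
        · exact absurd (Prod.ext h1 (by omega)) hx1.1
        · exact mul_mem (hi _ h1) (hPT _)
      have hck : δ.coeff k = (δ * P).coeff (k + n) -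
          ∑ x ∈ (Finset.HasAntidiagonal.antidiagonal (k + n)).erase (k, n), δ.coeff x.1 * P.coeff x.2 := by
        rw [hsum, hPmonic.coeff_natDegree]
        ring
      rw [hck]
      exact sub_mem hmulT hrest
  have hTall : ∀ k, ∃ g, e g = δ.coeff k := by
    intro k
    exact RingHom.mem_range.mp (key (δ.natDegree + 1) k (by omega))
  choose γ hγ using hTall
  set δ₀ : Polynomial (Polynomial (Fb Fq)) :=
    ∑ k ∈ δ.support, Polynomial.monomial k (γ k) with hδ₀
  have hδ₀coeff : ∀ j, e (δ₀.coeff j) = δ.coeff j := by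
    intro j
    rw [hδ₀, Polynomial.finset_sum_coeff]
    simp only [Polynomial.coeff_monomial]
    rw [Finset.sum_ite_eq' δ.support j γ]
    split_ifs with h
    · exact hγ j
    · rw [map_zero]
      exact (Polynomial.notMem_support_iff.mp h).symm
  have hδmap : δ = repB Fq δ₀ := by
    ext k
    rw [repB_coeff, hδ₀coeff]
  refine ⟨δ₀, hδmap, ?_⟩
  have hq1 : (1 : ℚ) < (qc Fq : ℚ) := by exact_mod_cast (by omega : 1 < qc Fq)
  have hmaxnonneg : (0 : ℚ) ≤ (qc Fq * m : ℚ) / ((qc Fq : ℚ) - 1) := by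
    apply div_nonneg
    · positivity
    · linarith
  rcases Finset.eq_empty_or_nonempty δ₀.support with hsupp | hsupp
  · have hD0 : degTheta Fq δ₀ = 0 := by rw [degTheta, hsupp]; rfl
    rw [hD0]
    push_cast
    exact le_max_of_le_left hmaxnonneg
  obtain ⟨k₀, hk₀mem, hk₀⟩ := Finset.exists_mem_eq_sup _ hsupp
    (fun j => (δ₀.coeff j).natDegree)
  have hg0 : δ₀.coeff k₀ ≠ 0 := Polynomial.mem_support_iff.mp hk₀mem
  set D : ℕ := degTheta Fq δ₀ with hD
  have hDk : D = (δ₀.coeff k₀).natDegree := hk₀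
  have heqFb : Polynomial.C ε' * δ₀.coeff k₀ ^ qc Fq ^ R
      = (δ₀ * P₀).coeff k₀ + F₀.coeff k₀ := by
    apply hinj
    have h1 : e ((δ₀ * P₀).coeff k₀) = (δ * P).coeff k₀ := by
      rw [show e ((δ₀ * P₀).coeff k₀) = (repB Fq (δ₀ * P₀)).coeff k₀ from
        (repB_coeff Fq _ k₀).symm, map_mul, ← hδmap, hPmap]
    have h2 : e (F₀.coeff k₀) = F.coeff k₀ := by
      rw [show e (F₀.coeff k₀) = (repB Fq F₀).coeff k₀ from (repB_coeff Fq _ k₀).symm, ← hF]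
    rw [map_add, map_mul, map_pow, h1, h2, show e (Polynomial.C ε') = constB Fq ε' from
      evB_C Fq ε', hε'B, hδ₀coeff]
    exact heqk k₀
  set S : ℕ := m * ∑ j ∈ Finset.Icc 1 R, qc Fq ^ j with hS
  have hP₀deg : degTheta Fq P₀ ≤ S := by
    rw [hP₀, hS]
    refine (degTheta_prod_le Fq _ _).trans ?_
    rw [Finset.mul_sum]
    refine Finset.sum_le_sum fun j _ => ?_
    refine (degTheta_pow_le Fq _ m).trans ?_
    refine Nat.mul_le_mul_left m ?_
    apply degTheta_le
    intro k
    rw [Polynomial.coeff_sub, Polynomial.coeff_X, Polynomial.coeff_C]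
    rcases eq_or_ne k 0 with rfl | hk0
    · simp [Polynomial.natDegree_X_pow]
    · rcases eq_or_ne k 1 with rfl | hk1
      · simp
      · simp [hk0, Ne.symm hk1]
  have hL : (Polynomial.C ε' * δ₀.coeff k₀ ^ qc Fq ^ R).natDegree = qc Fq ^ R * D := by
    rw [Polynomial.natDegree_C_mul hε'0, Polynomial.natDegree_pow, ← hDk]
  have hR1 : ((δ₀ * P₀).coeff k₀).natDegree ≤ D + S := by
    rw [Polynomial.coeff_mul]
    apply Polynomial.natDegree_sum_le_of_forall_le
    intro x _
    exact Polynomial.natDegree_mul_le.trans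
      (add_le_add (natDegree_coeff_le Fq δ₀ x.1)
        ((natDegree_coeff_le Fq P₀ x.2).trans hP₀deg))
  have hmain : qc Fq ^ R * D ≤ max (D + S) (degTheta Fq F₀) := by
    rw [← hL, heqFb]
    exact (Polynomial.natDegree_add_le _ _).trans
      (max_le_max hR1 (natDegree_coeff_le Fq F₀ k₀))
  rcases le_max_iff.mp hmain with hcase | hcase
  · refine le_max_of_le_left ?_
    rw [le_div_iff₀ (by linarith : (0 : ℚ) < (qc Fq : ℚ) - 1)]
    rw [hS, Finset.mul_sum] at hcase
    have hcast : (qc Fq : ℚ) ^ R * D ≤ D + m * ∑ j ∈ Finset.Icc 1 R, (qc Fq : ℚ) ^ j := by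
      rw [Finset.mul_sum]
      exact_mod_cast hcase
    have h0 : ∑ j ∈ Finset.Icc 1 R, (qc Fq : ℚ) ^ j
        = (qc Fq : ℚ) * ∑ j ∈ Finset.range R, (qc Fq : ℚ) ^ j := by
      rw [← Finset.Ico_add_one_right_eq_Icc, Finset.sum_Ico_eq_sum_range]
      rw [Finset.mul_sum]
      refine Finset.sum_congr rfl fun i _ => ?_
      rw [pow_add, pow_one]
    have hgeom := geom_sum_mul ((qc Fq : ℚ)) R
    have hgeo : ((qc Fq : ℚ) - 1) * ∑ j ∈ Finset.Icc 1 R, (qc Fq : ℚ) ^ j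
        = (qc Fq : ℚ) * ((qc Fq : ℚ) ^ R - 1) := by
      rw [h0]
      linear_combination (qc Fq : ℚ) * hgeom
    have hx1 : (1 : ℚ) < (qc Fq : ℚ) ^ R := one_lt_pow₀ hq1 (by omega)
    have h4 := mul_le_mul_of_nonneg_right hcast
      (by linarith : (0 : ℚ) ≤ (qc Fq : ℚ) - 1)
    have hgeo' : (m : ℚ) * (((qc Fq : ℚ) - 1) * ∑ j ∈ Finset.Icc 1 R, (qc Fq : ℚ) ^ j)
        = m * ((qc Fq : ℚ) * ((qc Fq : ℚ) ^ R - 1)) := by rw [hgeo]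
    have h2 : ((qc Fq : ℚ) ^ R - 1) * ((D : ℚ) * ((qc Fq : ℚ) - 1))
        ≤ ((qc Fq : ℚ) ^ R - 1) * ((qc Fq : ℚ) * m) := by linarith
    have h3 := le_of_mul_le_mul_left h2 (by linarith : (0 : ℚ) < (qc Fq : ℚ) ^ R - 1)
    linarith
  · refine le_max_of_le_right ?_
    rw [le_div_iff₀ (by positivity : (0 : ℚ) < (qc Fq : ℚ) ^ RdegB Fq N)]
    have : ((qc Fq ^ R * D : ℕ) : ℚ) ≤ ((degTheta Fq F₀ : ℕ) : ℚ) := by exact_mod_cast hcase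
    push_cast at this
    rw [hR] at this
    linarith

end ZHPC
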